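/- Let H be a Hilbert space and h : H → ℝ≥0 a continuous convex function. For λ > 0, let t_λ be the unique minimizer of t ↦ h(t) + λ‖t‖². Then for any 0 < λ ≤ μ, we have ‖t_λ − t_μ‖² ≤ ‖t_λ‖² − ‖t_μ‖². In particular the regularization path λ ↦ ‖t_λ‖ is nonincreasing. -/

import Mathlib

open RealInnerProductSpace

private lemma dir_ineq {H : Type*} [NormedAddCommGroup H] [InnerProductSpace ℝ H]
    (h : H → ℝ) (hhconv : ConvexOn ℝ Set.univ h) (ν : ℝ) (hν : 0 < ν) (a b : H)
    (hopt : ∀ t : H, h a + ν * ‖a‖ ^ 2 ≤ h t + ν * ‖t‖ ^ 2) :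
    h a - h b ≤ 2 * ν * ⟪a, b - a⟫ := by
  apply le_of_forall_pos_le_add
  intro ε hε
  set s : ℝ := ‖b - a‖ ^ 2 with hs
  have hs0 : 0 ≤ s := sq_nonneg _
  set θ : ℝ := min 1 (ε / (ν * s + 1)) with hθdef
  have hden : 0 < ν * s + 1 := by positivity
  have hθpos : 0 < θ := lt_min one_pos (div_pos hε hden)
  have hθ1 : θ ≤ 1 := min_le_left _ _
  -- convexity at the point a + θ • (b - a)
  have hconvpt : h (a + θ • (b - a)) ≤ (1 - θ) * h a + θ * h b := by
    have := hhconv.2 (Set.mem_univ a) (Set.mem_univ b)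
      (by linarith : (0:ℝ) ≤ 1 - θ) hθpos.le (by ring)
    have heq : (1 - θ) • a + θ • b = a + θ • (b - a) := by module
    rwa [heq] at this
  -- expand the norm
  have hnorm : ‖a + θ • (b - a)‖ ^ 2 = ‖a‖ ^ 2 + 2 * θ * ⟪a, b - a⟫ + θ ^ 2 * s := by
    rw [hs, norm_add_sq_real, real_inner_smul_right, norm_smul]
    simp [mul_pow, abs_of_pos hθpos]
    ring
  have hkey := hopt (a + θ • (b - a))
  rw [hnorm] at hkey
  -- from hkey and hconvpt : θ*(h a - h b) ≤ ν*(2θ⟪a,b-a⟫ + θ² s)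
  have h1 : θ * (h a - h b) ≤ ν * (2 * θ * ⟪a, b - a⟫ + θ ^ 2 * s) := by nlinarith
  have h2 : h a - h b ≤ 2 * ν * ⟪a, b - a⟫ + ν * θ * s := by
    have := le_of_mul_le_mul_left (by nlinarith : θ * (h a - h b) ≤ θ * (2 * ν * ⟪a, b - a⟫ + ν * θ * s)) hθpos
    linarith
  have hθs : ν * θ * s ≤ ε := by
    have hθle : θ ≤ ε / (ν * s + 1) := min_le_right _ _
    have h3 : ν * θ * s ≤ (ε / (ν * s + 1)) * (ν * s) := by
      have : θ * (ν * s) ≤ (ε / (ν * s + 1)) * (ν * s) := by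
        apply mul_le_mul_of_nonneg_right hθle; positivity
      linarith [this]
    have h4 : (ε / (ν * s + 1)) * (ν * s) ≤ ε := by
      rw [div_mul_eq_mul_div, div_le_iff₀ hden]
      nlinarith
    linarith
  linarith

/-- Lemma (ridge_reg_prop): let `h : H → ℝ` be a nonnegative continuous convex function
on a Hilbert space, and for `λ > 0` let `t_λ` minimize `t ↦ h t + λ‖t‖²`. Then for
`0 < λ ≤ μ`, `‖t_λ - t_μ‖² ≤ ‖t_λ‖² - ‖t_μ‖²`; in particular `‖t_μ‖ ≤ ‖t_λ‖`. -/
theorem stmt_8 {H : Type*} [NormedAddCommGroup H] [InnerProductSpace ℝ H]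
    (h : H → ℝ) (hh0 : ∀ t, 0 ≤ h t) (hhconv : ConvexOn ℝ Set.univ h)
    (hhcont : Continuous h)
    (lam mu : ℝ) (hlam : 0 < lam) (hlm : lam ≤ mu)
    (tl tm : H)
    (htl : ∀ t : H, h tl + lam * ‖tl‖ ^ 2 ≤ h t + lam * ‖t‖ ^ 2)
    (htm : ∀ t : H, h tm + mu * ‖tm‖ ^ 2 ≤ h t + mu * ‖t‖ ^ 2) :
    ‖tl - tm‖ ^ 2 ≤ ‖tl‖ ^ 2 - ‖tm‖ ^ 2 ∧ ‖tm‖ ≤ ‖tl‖ := by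
  have hmu : 0 < mu := lt_of_lt_of_le hlam hlm
  have hA := dir_ineq h hhconv mu hmu tm tl htm
  have hB := dir_ineq h hhconv lam hlam tl tm htl
  set c : ℝ := ⟪tm, tl - tm⟫ with hc
  set c' : ℝ := ⟪tl, tm - tl⟫ with hc'
  set s : ℝ := ‖tl - tm‖ ^ 2 with hsdef
  have hs0 : 0 ≤ s := sq_nonneg _
  have hcc' : c + c' = -s := by
    rw [hc, hc', hsdef, norm_sub_sq_real, inner_sub_right, inner_sub_right,
      real_inner_self_eq_norm_sq, real_inner_self_eq_norm_sq, real_inner_comm tl tm]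
    ring
  -- adding the two directional inequalities: 0 ≤ 2μc + 2λc'
  have hsum : 0 ≤ 2 * mu * c + 2 * lam * c' := by linarith
  -- hence 2λs ≤ 2(μ-λ)c
  have hkey : 2 * lam * s ≤ 2 * (mu - lam) * c := by nlinarith
  -- show c ≥ 0
  have hc0 : 0 ≤ c := by
    rcases lt_or_eq_of_le hlm with hlt | heq
    · nlinarith
    · -- lam = mu: then s ≤ 0, so s = 0, tl = tm, c = 0
      subst heq
      have hs : s = 0 := le_antisymm (by nlinarith) hs0
      have h2 : ‖tl - tm‖ ^ 2 = 0 := hs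
      have : tl - tm = 0 := norm_eq_zero.mp (pow_eq_zero_iff two_ne_zero |>.mp h2)
      simp [hc, this]
  -- s + 2c = ‖tl‖² - ‖tm‖²
  have hexp : s + 2 * c = ‖tl‖ ^ 2 - ‖tm‖ ^ 2 := by
    rw [hsdef, hc, norm_sub_sq_real, inner_sub_right, real_inner_self_eq_norm_sq,
      real_inner_comm tm tl]
    ring
  constructor
  · linarith
  · nlinarith [norm_nonneg tl, norm_nonneg tm]
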